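/- (Eckart–Young for the Frobenius norm) For any matrix X ∈ C^{m×n} with singular value decomposition X = U Λ V^H (singular values sorted in decreasing order), the matrix U Λ_K V^H, where Λ_K retains only the K largest singular values and zeroes out the rest, is a minimizer of ||X - H||_F over all matrices H with rank at most K. -/

import Mathlib

open scoped BigOperators
open Matrix


lemma EY.frob_trace (m n : ℕ) (A : Matrix (Fin m) (Fin n) ℂ) :
    (Aᴴ * A).trace = ((∑ i, ∑ j, ‖A i j‖ ^ 2 : ℝ) : ℂ) := by
  rw [Matrix.trace]
  push_cast
  rw [Finset.sum_comm]
  apply Finset.sum_congr rfl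
  intro i _
  simp only [Matrix.diag_apply, Matrix.mul_apply, Matrix.conjTranspose_apply]
  apply Finset.sum_congr rfl
  intro j _
  rw [show star (A j i) = (starRingEnd ℂ) (A j i) from rfl, Complex.conj_mul']

lemma EY.frob_unitary (m n : ℕ) (U : Matrix (Fin m) (Fin m) ℂ)
    (V : Matrix (Fin n) (Fin n) ℂ) (hU : Uᴴ * U = 1) (hV : Vᴴ * V = 1)
    (A : Matrix (Fin m) (Fin n) ℂ) :
    ∑ i, ∑ j, ‖(U * A * Vᴴ) i j‖ ^ 2 = ∑ i, ∑ j, ‖A i j‖ ^ 2 := by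
  have key : ((U * A * Vᴴ)ᴴ * (U * A * Vᴴ)).trace = (Aᴴ * A).trace := by
    have h1 : (U * A * Vᴴ)ᴴ * (U * A * Vᴴ) = V * (Aᴴ * A) * Vᴴ := by
      simp only [Matrix.conjTranspose_mul, Matrix.conjTranspose_conjTranspose,
        Matrix.mul_assoc]
      rw [← Matrix.mul_assoc Uᴴ U, hU, Matrix.one_mul]
    rw [h1, Matrix.trace_mul_comm, ← Matrix.mul_assoc, ← Matrix.mul_assoc, hV,
      Matrix.one_mul]
  rw [EY.frob_trace, EY.frob_trace] at key
  exact_mod_cast key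


lemma EY.collapse {M : Type*} [AddCommMonoid M] (n : ℕ) (i : ℕ) (f : Fin n → M) :
    ∑ j : Fin n, (if i = (j : ℕ) then f j else 0)
      = if h : i < n then f ⟨i, h⟩ else 0 := by
  by_cases h : i < n
  · rw [dif_pos h]
    have hcong : ∀ j : Fin n, (if i = (j:ℕ) then f j else 0) = (if j = ⟨i, h⟩ then f j else 0) := by
      intro j
      apply if_congr _ rfl rfl
      rw [Fin.ext_iff]
      exact eq_comm
    rw [Finset.sum_congr rfl (fun j _ => hcong j)]
    simp
  · rw [dif_neg h]
    apply Finset.sum_eq_zero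
    intro j _
    have := j.isLt
    exact if_neg (by omega)

lemma EY.reindex (m n : ℕ) (g : ℕ → ℝ) :
    ∑ i : Fin m, (if (i : ℕ) < n then g i else 0)
      = ∑ j : Fin n, (if (j : ℕ) < m then g j else 0) := by
  have h : ∀ p q : ℕ, ∑ k ∈ Finset.range p, (if k < q then g k else 0)
      = ∑ k ∈ Finset.range (min p q), g k := by
    intro p q
    rw [← Finset.sum_filter]
    congr 1
    ext k
    simp only [Finset.mem_filter, Finset.mem_range, Nat.lt_min]
  rw [Fin.sum_univ_eq_sum_range (fun k => if k < n then g k else 0),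
    Fin.sum_univ_eq_sum_range (fun k => if k < m then g k else 0), h, h, Nat.min_comm]

lemma EY.maj (n K : ℕ) (a : ℕ → ℝ) (ha0 : ∀ i, 0 ≤ a i) (ham : Antitone a)
    (c : Fin n → ℝ) (hc0 : ∀ i, 0 ≤ c i) (hc1 : ∀ i, c i ≤ 1)
    (hsum : (n : ℝ) - K ≤ ∑ i, c i) :
    ∑ i : Fin n, (if K ≤ (i : ℕ) then a i else 0) ≤ ∑ i : Fin n, a i * c i := by
  by_cases hK : n ≤ K
  · have h0 : ∑ i : Fin n, (if K ≤ (i : ℕ) then a i else 0) = 0 := by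
      apply Finset.sum_eq_zero
      intro i _
      have := i.isLt
      exact if_neg (by omega)
    rw [h0]
    exact Finset.sum_nonneg fun i _ => mul_nonneg (ha0 i) (hc0 i)
  · push_neg at hK
    have key : ∀ i : Fin n, (if K ≤ (i:ℕ) then a i else 0) + a K * (if K ≤ (i:ℕ) then c i - 1 else c i) ≤ a i * c i := by
      intro i
      by_cases hi : K ≤ (i : ℕ)
      · rw [if_pos hi, if_pos hi]
        have h1 : a i * (c i - 1) ≥ a K * (c i - 1) :=
          mul_le_mul_of_nonpos_right (ham hi) (by linarith [hc1 i])
        nlinarith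
      · rw [if_neg hi, if_neg hi]
        push_neg at hi
        have := ham (le_of_lt hi)
        nlinarith [hc0 i]
    calc ∑ i : Fin n, (if K ≤ (i : ℕ) then a i else 0)
        = ∑ i : Fin n, ((if K ≤ (i:ℕ) then a i else 0) + a K * (if K ≤ (i:ℕ) then c i - 1 else c i))
          - a K * ∑ i : Fin n, (if K ≤ (i:ℕ) then c i - 1 else c i) := by
          rw [Finset.sum_add_distrib, ← Finset.mul_sum]; ring
      _ ≤ ∑ i : Fin n, a i * c i - a K * ∑ i : Fin n, (if K ≤ (i:ℕ) then c i - 1 else c i) := by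
          have := Finset.sum_le_sum (fun i (_ : i ∈ Finset.univ) => key i)
          linarith
      _ ≤ ∑ i : Fin n, a i * c i := by
          have h2 : ∑ i : Fin n, (if K ≤ (i:ℕ) then c i - 1 else c i)
              = ∑ i, c i - ∑ i : Fin n, (if K ≤ (i:ℕ) then (1:ℝ) else 0) := by
            rw [← Finset.sum_sub_distrib]
            apply Finset.sum_congr rfl
            intro i _
            by_cases hi : K ≤ (i:ℕ) <;> simp [hi]
          have h3 : ∑ i : Fin n, (if K ≤ (i:ℕ) then (1:ℝ) else 0) = (n : ℝ) - K := by
            rw [Fin.sum_univ_eq_sum_range (fun k => if K ≤ k then (1:ℝ) else 0),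
              Finset.range_eq_Ico, ← Finset.sum_Ico_consecutive _ (Nat.zero_le K) (le_of_lt hK)]
            have e1 : ∑ k ∈ Finset.Ico 0 K, (if K ≤ k then (1:ℝ) else 0) = 0 := by
              apply Finset.sum_eq_zero
              intro k hk
              rw [Finset.mem_Ico] at hk
              exact if_neg (by omega)
            have e2 : ∑ k ∈ Finset.Ico K n, (if K ≤ k then (1:ℝ) else 0) = ((n - K : ℕ) : ℝ) := by
              have : ∀ k ∈ Finset.Ico K n, (if K ≤ k then (1:ℝ) else 0) = 1 := by
                intro k hk
                exact if_pos (Finset.mem_Ico.mp hk).1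
              rw [Finset.sum_congr rfl this, Finset.sum_const, Nat.card_Ico, nsmul_eq_mul,
                mul_one]
            rw [e1, e2, Nat.cast_sub (le_of_lt hK)]
            ring
          have h4 : 0 ≤ a K * ∑ i : Fin n, (if K ≤ (i:ℕ) then c i - 1 else c i) := by
            apply mul_nonneg (ha0 K)
            rw [h2, h3]
            linarith
          linarith


lemma EY.bessel_rows (m n d : ℕ) (M : Matrix (Fin m) (Fin n) ℂ)
    (v : Fin d → EuclideanSpace ℂ (Fin n)) (hv : Orthonormal ℂ v) :
    ∑ l, ∑ i, ‖(M *ᵥ (WithLp.equiv 2 (Fin n → ℂ) (v l))) i‖ ^ 2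
      ≤ ∑ i, ∑ j, ‖M i j‖ ^ 2 := by
  rw [Finset.sum_comm]
  apply Finset.sum_le_sum
  intro i _
  set x : EuclideanSpace ℂ (Fin n) :=
    (WithLp.equiv 2 (Fin n → ℂ)).symm (fun j => starRingEnd ℂ (M i j)) with hxdef
  have hx : ∀ l, (M *ᵥ (WithLp.equiv 2 (Fin n → ℂ) (v l))) i = inner (𝕜 := ℂ) x (v l) := by
    intro l
    simp [hxdef, PiLp.inner_apply, Matrix.mulVec, dotProduct, mul_comm]
  have hnorm : ∀ l, ‖(M *ᵥ (WithLp.equiv 2 (Fin n → ℂ) (v l))) i‖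
      = ‖inner (𝕜 := ℂ) (v l) x‖ := by
    intro l
    rw [hx l, ← inner_conj_symm (v l) x, RCLike.norm_conj]
  calc ∑ l, ‖(M *ᵥ (WithLp.equiv 2 (Fin n → ℂ) (v l))) i‖ ^ 2
      = ∑ l, ‖inner (𝕜 := ℂ) (v l) x‖ ^ 2 := by
        apply Finset.sum_congr rfl; intro l _; rw [hnorm l]
    _ ≤ ‖x‖ ^ 2 := hv.sum_inner_products_le x
    _ = ∑ j, ‖M i j‖ ^ 2 := by
        rw [EuclideanSpace.norm_eq, Real.sq_sqrt (Finset.sum_nonneg fun j _ => sq_nonneg _)]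
        apply Finset.sum_congr rfl
        intro j _
        simp [hxdef]

lemma EY.bessel_coord (n d : ℕ) (v : Fin d → EuclideanSpace ℂ (Fin n))
    (hv : Orthonormal ℂ v) (j : Fin n) :
    ∑ l, ‖v l j‖ ^ 2 ≤ 1 := by
  set x : EuclideanSpace ℂ (Fin n) := EuclideanSpace.single j (1 : ℂ) with hxdef
  have hx : ∀ l, ‖v l j‖ = ‖inner (𝕜 := ℂ) (v l) x‖ := by
    intro l
    rw [hxdef]
    simp [PiLp.inner_apply, EuclideanSpace.single_apply]
  calc ∑ l, ‖v l j‖ ^ 2 = ∑ l, ‖inner (𝕜 := ℂ) (v l) x‖ ^ 2 := by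
        apply Finset.sum_congr rfl; intro l _; rw [hx l]
    _ ≤ ‖x‖ ^ 2 := hv.sum_inner_products_le x
    _ = 1 := by rw [hxdef, EuclideanSpace.norm_single]; norm_num

lemma EY.core (m n K : ℕ) (σ : ℕ → ℝ) (hσ0 : ∀ i, 0 ≤ σ i) (hσmono : Antitone σ)
    (S : Matrix (Fin m) (Fin n) ℂ)
    (hS : ∀ i j, S i j = if (i : ℕ) = (j : ℕ) then ((σ (i : ℕ) : ℝ) : ℂ) else 0)
    (B : Matrix (Fin m) (Fin n) ℂ) (hB : B.rank ≤ K) :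
    ∑ j : Fin n, (if K ≤ (j : ℕ) then (if (j : ℕ) < m then (σ (j : ℕ)) ^ 2 else 0) else 0)
      ≤ ∑ i, ∑ j, ‖(S - B) i j‖ ^ 2 := by
  classical
  set a : ℕ → ℝ := fun k => if k < m then (σ k) ^ 2 else 0 with ha
  have ha0 : ∀ k, 0 ≤ a k := by
    intro k; rw [ha]; dsimp only; split
    · exact sq_nonneg _
    · exact le_refl _
  have ham : Antitone a := by
    intro k k' hkk'
    rw [ha]; dsimp only
    by_cases h' : k' < m
    · rw [if_pos h', if_pos (lt_of_le_of_lt hkk' h')]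
      exact pow_le_pow_left₀ (hσ0 k') (hσmono hkk') 2
    · rw [if_neg h']
      split
      · exact sq_nonneg _
      · exact le_refl _
  -- kernel of B
  set T := Matrix.toEuclideanLin B with hT
  have hrank : B.rank = Module.finrank ℂ (LinearMap.range T) := by
    rw [hT, Matrix.toEuclideanLin_eq_toLin]
    exact Matrix.rank_eq_finrank_range_toLin B _ _
  set d := Module.finrank ℂ (LinearMap.ker T) with hd
  have hrn : B.rank + d = n := by
    rw [hrank, hd]
    have := LinearMap.finrank_range_add_finrank_ker T
    rwa [finrank_euclideanSpace_fin] at this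
  set b := stdOrthonormalBasis ℂ (LinearMap.ker T) with hb
  set v : Fin d → EuclideanSpace ℂ (Fin n) := fun l => ((b l : LinearMap.ker T) : EuclideanSpace ℂ (Fin n)) with hv
  have hvon : Orthonormal ℂ v := by
    have hbon := b.orthonormal
    constructor
    · intro l
      rw [hv]; dsimp only
      rw [← Submodule.coe_norm]
      exact hbon.1 l
    · intro l l' hne
      rw [hv]; dsimp only
      rw [← Submodule.coe_inner]
      exact hbon.2 hne
  have hker : ∀ l, B *ᵥ (WithLp.equiv 2 (Fin n → ℂ) (v l)) = 0 := by
    intro l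
    have h0 : T (v l) = 0 := (b l).2
    rw [hT, Matrix.toEuclideanLin_apply] at h0
    have := congrArg (WithLp.equiv 2 (Fin m → ℂ)) h0
    simpa using this
  set c : Fin n → ℝ := fun j => ∑ l, ‖v l j‖ ^ 2 with hc
  have hc0 : ∀ j, 0 ≤ c j := fun j => Finset.sum_nonneg fun l _ => sq_nonneg _
  have hc1 : ∀ j, c j ≤ 1 := fun j => EY.bessel_coord n d v hvon j
  have hcsum : ∑ j, c j = (d : ℝ) := by
    rw [hc]; dsimp only
    rw [Finset.sum_comm]
    have : ∀ l : Fin d, ∑ j : Fin n, ‖v l j‖ ^ 2 = 1 := by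
      intro l
      have h1 : ‖v l‖ = 1 := hvon.1 l
      have := EuclideanSpace.norm_eq (v l)
      rw [h1] at this
      have h2 := congrArg (· ^ 2) this
      simp only [one_pow] at h2
      rw [Real.sq_sqrt (Finset.sum_nonneg fun j _ => sq_nonneg _)] at h2
      exact h2.symm
    rw [Finset.sum_congr rfl (fun l _ => this l), Finset.sum_const, Finset.card_univ,
      Fintype.card_fin, nsmul_eq_mul, mul_one]
  have hsum : (n : ℝ) - K ≤ ∑ j, c j := by
    rw [hcsum]
    have : n ≤ K + d := by omega
    have := Nat.cast_le (α := ℝ) |>.mpr this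
    push_cast at this ⊢
    linarith
  -- computation of ∑_i ‖(S *ᵥ w) i‖² for w in kernel
  have hcompute : ∀ l : Fin d,
      ∑ i : Fin m, ‖((S - B) *ᵥ (WithLp.equiv 2 (Fin n → ℂ) (v l))) i‖ ^ 2
        = ∑ j : Fin n, a (j : ℕ) * ‖v l j‖ ^ 2 := by
    intro l
    set w : Fin n → ℂ := WithLp.equiv 2 (Fin n → ℂ) (v l) with hw
    have hSB : (S - B) *ᵥ w = S *ᵥ w := by
      rw [Matrix.sub_mulVec, hker l, sub_zero]
    rw [hSB]
    set wt : ℕ → ℂ := fun k => if h : k < n then w ⟨k, h⟩ else 0 with hwt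
    have hSw : ∀ i : Fin m, (S *ᵥ w) i
        = if h : (i : ℕ) < n then ((σ (i : ℕ) : ℝ) : ℂ) * w ⟨(i : ℕ), h⟩ else 0 := by
      intro i
      rw [Matrix.mulVec, dotProduct]
      calc ∑ j : Fin n, S i j * w j
          = ∑ j : Fin n, (if (i : ℕ) = (j : ℕ) then ((σ (i : ℕ) : ℝ) : ℂ) * w j else 0) := by
            apply Finset.sum_congr rfl
            intro j _
            rw [hS i j]
            split <;> simp
        _ = _ := EY.collapse n (i : ℕ) _
    have hni : ∀ i : Fin m, ‖(S *ᵥ w) i‖ ^ 2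
        = if (i : ℕ) < n then (σ (i : ℕ)) ^ 2 * ‖wt (i : ℕ)‖ ^ 2 else 0 := by
      intro i
      rw [hSw i]
      by_cases h : (i : ℕ) < n
      · rw [dif_pos h, if_pos h, hwt]
        dsimp only
        rw [dif_pos h, norm_mul, Complex.norm_real, Real.norm_of_nonneg (hσ0 _),
          mul_pow]
      · rw [dif_neg h, if_neg h, norm_zero]
        ring
    calc ∑ i : Fin m, ‖(S *ᵥ w) i‖ ^ 2
        = ∑ i : Fin m, (if (i : ℕ) < n then (σ (i : ℕ)) ^ 2 * ‖wt (i : ℕ)‖ ^ 2 else 0) := by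
          apply Finset.sum_congr rfl
          intro i _
          rw [hni i]
      _ = ∑ j : Fin n, (if (j : ℕ) < m then (σ (j : ℕ)) ^ 2 * ‖wt (j : ℕ)‖ ^ 2 else 0) :=
          EY.reindex m n (fun k => (σ k) ^ 2 * ‖wt k‖ ^ 2)
      _ = ∑ j : Fin n, a (j : ℕ) * ‖v l j‖ ^ 2 := by
          apply Finset.sum_congr rfl
          intro j _
          have hwtj : wt (j : ℕ) = v l j := by
            rw [hwt]
            dsimp only
            rw [dif_pos j.isLt]
            rw [hw]
            rfl
          rw [hwtj, ha]
          dsimp only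
          by_cases h : (j : ℕ) < m
          · rw [if_pos h, if_pos h]
          · rw [if_neg h, if_neg h, zero_mul]
  -- final chain
  calc ∑ j : Fin n, (if K ≤ (j : ℕ) then (if (j : ℕ) < m then (σ (j : ℕ)) ^ 2 else 0) else 0)
      = ∑ j : Fin n, (if K ≤ (j : ℕ) then a (j : ℕ) else 0) := rfl
    _ ≤ ∑ j : Fin n, a (j : ℕ) * c j := EY.maj n K a ha0 ham c hc0 hc1 hsum
    _ = ∑ l : Fin d, ∑ i : Fin m, ‖((S - B) *ᵥ (WithLp.equiv 2 (Fin n → ℂ) (v l))) i‖ ^ 2 := by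
        rw [Finset.sum_congr rfl (fun l (_ : l ∈ Finset.univ) => hcompute l)]
        rw [Finset.sum_comm]
        apply Finset.sum_congr rfl
        intro j _
        rw [hc]
        dsimp only
        rw [Finset.mul_sum]
    _ ≤ ∑ i, ∑ j, ‖(S - B) i j‖ ^ 2 := EY.bessel_rows m n d (S - B) v hvon


/-- Eckart–Young, Frobenius norm: if `X = U Λ Vᴴ` is a singular value
decomposition (with `U`, `V` unitary and `Λ` the rectangular diagonal matrix of the
singular values `σ_0 ≥ σ_1 ≥ … ≥ 0`), then `U Λ_K Vᴴ`, where `Λ_K` retains only the `K`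
largest singular values, minimises `‖X - H‖_F` over matrices `H` of rank at most `K`. -/
theorem eckart_young (m n K : ℕ) (X : Matrix (Fin m) (Fin n) ℂ)
    (U : Matrix (Fin m) (Fin m) ℂ) (V : Matrix (Fin n) (Fin n) ℂ)
    (hU : U ∈ Matrix.unitaryGroup (Fin m) ℂ) (hV : V ∈ Matrix.unitaryGroup (Fin n) ℂ)
    (σ : ℕ → ℝ) (hσ0 : ∀ i, 0 ≤ σ i) (hσmono : Antitone σ)
    (S SK : Matrix (Fin m) (Fin n) ℂ)
    (hS : ∀ i j, S i j = if (i : ℕ) = (j : ℕ) then ((σ (i : ℕ) : ℝ) : ℂ) else 0)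
    (hSK : ∀ i j, SK i j
      = if (i : ℕ) = (j : ℕ) ∧ (i : ℕ) < K then ((σ (i : ℕ) : ℝ) : ℂ) else 0)
    (hX : X = U * S * Vᴴ)
    (H : Matrix (Fin m) (Fin n) ℂ) (hH : H.rank ≤ K) :
    Real.sqrt (∑ i, ∑ j, ‖(X - U * SK * Vᴴ) i j‖ ^ 2)
      ≤ Real.sqrt (∑ i, ∑ j, ‖(X - H) i j‖ ^ 2) := by
  classical
  have hU1 : Uᴴ * U = 1 := by
    have := (Matrix.mem_unitaryGroup_iff'.mp hU)
    rwa [Matrix.star_eq_conjTranspose] at this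
  have hU2 : U * Uᴴ = 1 := by
    have := (Matrix.mem_unitaryGroup_iff.mp hU)
    rwa [Matrix.star_eq_conjTranspose] at this
  have hV1 : Vᴴ * V = 1 := by
    have := (Matrix.mem_unitaryGroup_iff'.mp hV)
    rwa [Matrix.star_eq_conjTranspose] at this
  have hV2 : V * Vᴴ = 1 := by
    have := (Matrix.mem_unitaryGroup_iff.mp hV)
    rwa [Matrix.star_eq_conjTranspose] at this
  apply Real.sqrt_le_sqrt
  -- rewrite LHS matrix
  have hL : X - U * SK * Vᴴ = U * (S - SK) * Vᴴ := by
    rw [hX, Matrix.mul_sub, Matrix.sub_mul]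
  set B : Matrix (Fin m) (Fin n) ℂ := Uᴴ * H * V with hBdef
  have hR : X - H = U * (S - B) * Vᴴ := by
    rw [hX, Matrix.mul_sub, Matrix.sub_mul, hBdef]
    congr 1
    symm
    calc U * (Uᴴ * H * V) * Vᴴ
        = U * (Uᴴ * (H * (V * Vᴴ))) := by simp only [Matrix.mul_assoc]
      _ = H := by rw [hV2, Matrix.mul_one, ← Matrix.mul_assoc, hU2, Matrix.one_mul]
  rw [hL, hR, EY.frob_unitary m n U V hU1 hV1, EY.frob_unitary m n U V hU1 hV1]
  have hBrank : B.rank ≤ K := by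
    calc B.rank ≤ (Uᴴ * H).rank := Matrix.rank_mul_le_left _ _
      _ ≤ H.rank := Matrix.rank_mul_le_right _ _
      _ ≤ K := hH
  have hcore := EY.core m n K σ hσ0 hσmono S hS B hBrank
  refine le_trans (le_of_eq ?_) hcore
  -- frob (S - SK) equals the truncated diagonal sum
  have hdiff : ∀ (i : Fin m) (j : Fin n), ‖(S - SK) i j‖ ^ 2
      = if (i : ℕ) = (j : ℕ) then (if (i : ℕ) < K then 0 else (σ (i : ℕ)) ^ 2) else 0 := by
    intro i j
    rw [Matrix.sub_apply, hS i j, hSK i j]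
    by_cases h : (i : ℕ) = (j : ℕ)
    · rw [if_pos h]
      by_cases hik : (i : ℕ) < K
      · rw [if_pos ⟨h, hik⟩, if_pos h, if_pos hik, sub_self, norm_zero]
        ring
      · rw [if_neg (fun hc => hik hc.2), if_pos h, if_neg hik, sub_zero,
          Complex.norm_real, Real.norm_of_nonneg (hσ0 _)]
    · rw [if_neg h, if_neg (fun hc => h hc.1), if_neg h, sub_self, norm_zero]
      ring
  calc ∑ i : Fin m, ∑ j : Fin n, ‖(S - SK) i j‖ ^ 2
      = ∑ i : Fin m, (if h : (i : ℕ) < n then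
          (if (i : ℕ) < K then 0 else (σ (i : ℕ)) ^ 2) else 0) := by
        apply Finset.sum_congr rfl
        intro i _
        rw [Finset.sum_congr rfl (fun j (_ : j ∈ Finset.univ) => hdiff i j)]
        exact EY.collapse n (i : ℕ) _
    _ = ∑ i : Fin m, (if (i : ℕ) < n then
          (if (i : ℕ) < K then 0 else (σ (i : ℕ)) ^ 2) else 0) := by
        apply Finset.sum_congr rfl
        intro i _
        by_cases h : (i : ℕ) < n
        · rw [dif_pos h, if_pos h]
        · rw [dif_neg h, if_neg h]
    _ = ∑ j : Fin n, (if (j : ℕ) < m then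
          (if (j : ℕ) < K then 0 else (σ (j : ℕ)) ^ 2) else 0) :=
        EY.reindex m n (fun k => if k < K then 0 else (σ k) ^ 2)
    _ = ∑ j : Fin n, (if K ≤ (j : ℕ) then (if (j : ℕ) < m then (σ (j : ℕ)) ^ 2 else 0) else 0) := by
        apply Finset.sum_congr rfl
        intro j _
        by_cases h1 : (j : ℕ) < m <;> by_cases h2 : (j : ℕ) < K
        · rw [if_pos h1, if_pos h2, if_neg (by omega : ¬ K ≤ (j : ℕ))]
        · rw [if_pos h1, if_neg h2, if_pos (by omega : K ≤ (j : ℕ)), if_pos h1]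
        · rw [if_neg h1, if_neg (by omega : ¬ K ≤ (j : ℕ))]
        · rw [if_neg h1, if_pos (by omega : K ≤ (j : ℕ)), if_neg h1]
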